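/- For all real d₁, d₂ and M, the 4×4 symmetric matrix (e^{-M}/4)·A, where A has diagonal entries (Σ-4, Σ-4, Σ, Σ) with Σ = e^{-d₁}+e^{d₁}+e^{-d₂}+e^{d₂}, entries A₁₃ = A₃₁ = e^{-d₁}-e^{d₁}, A₁₄ = A₄₁ = e^{-d₂}-e^{d₂}, A₂₃ = A₃₂ = e^{-d₂}-e^{d₂}, A₂₄ = A₄₂ = -(e^{-d₁}-e^{d₁}), and A₁₂ = A₂₁ = A₃₄ = A₄₃ = 0, is positive semidefinite. -/

import Mathlib

lemma key_quad (u U v V a b c d : ℝ) (hu : 0 < u) (hU : 0 < U) (hv : 0 < v)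
    (hV : 0 < V) (huU : u * U = 1) (hvV : v * V = 1) :
    0 ≤ (u + U + v + V - 4) * (a^2 + b^2) + (u + U + v + V) * (c^2 + d^2)
      + 2 * (u - U) * (a * c - b * d) + 2 * (v - V) * (a * d + b * c) := by
  have hs : 2 ≤ u + U := by nlinarith [sq_nonneg (u - U)]
  have ht : 2 ≤ v + V := by nlinarith [sq_nonneg (v - V)]
  have hS : 0 ≤ u + U + v + V - 4 := by linarith
  rcases hS.eq_or_lt with hS0 | hS'
  · have hu2 : u + U = 2 := by linarith
    have hv2 : v + V = 2 := by linarith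
    have h1 : u - U = 0 := by
      have : (u - U)^2 = 0 := by nlinarith
      exact pow_eq_zero_iff (two_ne_zero) |>.mp this
    have h2 : v - V = 0 := by
      have : (v - V)^2 = 0 := by nlinarith
      exact pow_eq_zero_iff (two_ne_zero) |>.mp this
    rw [h1, h2]
    nlinarith [sq_nonneg c, sq_nonneg d]
  · nlinarith [sq_nonneg ((u + U + v + V - 4) * a + (u - U) * c + (v - V) * d),
      sq_nonneg ((u + U + v + V - 4) * b + (v - V) * c - (u - U) * d),
      mul_nonneg (mul_nonneg (by linarith : (0:ℝ) ≤ u + U - 2)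
        (by linarith : (0:ℝ) ≤ v + V - 2))
        (add_nonneg (sq_nonneg c) (sq_nonneg d)), hS', sq_nonneg a, sq_nonneg b]

open Real in
theorem bellman_hessian_posSemidef (d₁ d₂ M : ℝ) :
    Matrix.PosSemidef
      ((Real.exp (-M) / 4) •
        (!![exp (-d₁) + exp d₁ + exp (-d₂) + exp d₂ - 4, 0,
              exp (-d₁) - exp d₁, exp (-d₂) - exp d₂;
            0, exp (-d₁) + exp d₁ + exp (-d₂) + exp d₂ - 4,
              exp (-d₂) - exp d₂, -(exp (-d₁) - exp d₁);
            exp (-d₁) - exp d₁, exp (-d₂) - exp d₂,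
              exp (-d₁) + exp d₁ + exp (-d₂) + exp d₂, 0;
            exp (-d₂) - exp d₂, -(exp (-d₁) - exp d₁), 0,
              exp (-d₁) + exp d₁ + exp (-d₂) + exp d₂] :
          Matrix (Fin 4) (Fin 4) ℝ)) := by
  rw [Matrix.posSemidef_iff_dotProduct_mulVec]
  constructor
  · ext i j
    fin_cases i <;> fin_cases j <;>
      simp [Matrix.conjTranspose_apply, Matrix.smul_apply]
  · intro x
    have huU : exp (-d₁) * exp d₁ = 1 := by rw [← Real.exp_add]; simp
    have hvV : exp (-d₂) * exp d₂ = 1 := by rw [← Real.exp_add]; simp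
    have key := key_quad (exp (-d₁)) (exp d₁) (exp (-d₂)) (exp d₂)
      (x 0) (x 1) (x 2) (x 3) (exp_pos _) (exp_pos _) (exp_pos _) (exp_pos _) huU hvV
    have hM : (0:ℝ) ≤ Real.exp (-M) / 4 := by positivity
    simp [Matrix.mulVec, dotProduct, Fin.sum_univ_four, Matrix.smul_apply,
      Fin.isValue, Matrix.cons_val_zero, Matrix.cons_val_one, Matrix.head_cons]
    nlinarith [mul_nonneg hM key]
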